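/- Let N ≥ 2 and let ψ ∈ ℂ^N be a unit vector, with associated pure state P = ψψ*. Then ρ := (I − P)/(N−1) is a density matrix which is not invertible and satisfies Tr[ρ²] = 1/(N−1). In particular, there exist non-invertible density matrices whose Bloch vectors have norm exactly r_N = √(2/(N(N−1))), so the insphere of Bloch space touches the boundary of Bloch space and its radius r_N is optimal. -/

import Mathlib

open scoped ComplexOrder

section Aux

variable {N : ℕ} (ψ : Fin N → ℂ)

lemma aux_sum (hψ : ∑ i, ‖ψ i‖ ^ 2 = 1) : ∑ i, star (ψ i) * ψ i = (1 : ℂ) := by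
  have h : ∀ i, star (ψ i) * ψ i = ((‖ψ i‖ ^ 2 : ℝ) : ℂ) := by
    intro i
    rw [Complex.star_def, mul_comm, Complex.mul_conj, Complex.normSq_eq_norm_sq]
  rw [Finset.sum_congr rfl fun i _ => h i, ← Complex.ofReal_sum, hψ]
  simp

lemma aux_idem (hψ : ∑ i, ‖ψ i‖ ^ 2 = 1) :
    Matrix.vecMulVec ψ (star ψ) * Matrix.vecMulVec ψ (star ψ) = Matrix.vecMulVec ψ (star ψ) := by
  ext i j
  simp only [Matrix.mul_apply, Matrix.vecMulVec_apply, Pi.star_apply]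
  calc ∑ k, ψ i * star (ψ k) * (ψ k * star (ψ j))
      = (ψ i * star (ψ j)) * ∑ k, star (ψ k) * ψ k := by
        rw [Finset.mul_sum]; congr 1; ext k; ring
    _ = ψ i * star (ψ j) := by rw [aux_sum ψ hψ, mul_one]

lemma aux_trace (hψ : ∑ i, ‖ψ i‖ ^ 2 = 1) :
    (Matrix.vecMulVec ψ (star ψ)).trace = 1 := by
  simp only [Matrix.trace, Matrix.diag, Matrix.vecMulVec_apply, Pi.star_apply]
  rw [← aux_sum ψ hψ]
  congr 1; ext k; ring

end Aux

/-- Let `N ≥ 2` and let `ψ ∈ ℂ^N` be a unit vector with associated pure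
state `P = ψψ*`. Then `ρ := (I − P)/(N−1)` is a density matrix which is not invertible
and satisfies `Tr[ρ²] = 1/(N−1)`. In particular there exist non-invertible density
matrices whose Bloch vectors have norm exactly `r_N = √(2/(N(N−1)))`: the insphere of
Bloch space touches the boundary of Bloch space, so its radius `r_N` is optimal. -/
theorem orthocomplement_of_pure_state_touches_insphere
    (N : ℕ) (hN : 2 ≤ N) (ψ : Fin N → ℂ) (hψ : ∑ i, ‖ψ i‖ ^ 2 = 1) :
    (((N : ℂ) - 1)⁻¹ •
        ((1 : Matrix (Fin N) (Fin N) ℂ) - Matrix.vecMulVec ψ (star ψ))).PosSemidef ∧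
    (((N : ℂ) - 1)⁻¹ •
        ((1 : Matrix (Fin N) (Fin N) ℂ) - Matrix.vecMulVec ψ (star ψ))).trace = 1 ∧
    ¬ IsUnit (((N : ℂ) - 1)⁻¹ •
        ((1 : Matrix (Fin N) (Fin N) ℂ) - Matrix.vecMulVec ψ (star ψ))) ∧
    ((((N : ℂ) - 1)⁻¹ •
          ((1 : Matrix (Fin N) (Fin N) ℂ) - Matrix.vecMulVec ψ (star ψ))) *
        (((N : ℂ) - 1)⁻¹ •
          ((1 : Matrix (Fin N) (Fin N) ℂ) - Matrix.vecMulVec ψ (star ψ)))).trace =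
      1 / ((N : ℂ) - 1) := by
  set P : Matrix (Fin N) (Fin N) ℂ := Matrix.vecMulVec ψ (star ψ) with hP
  set A : Matrix (Fin N) (Fin N) ℂ := 1 - P with hA
  have hNne : ((N : ℂ) - 1) ≠ 0 := by
    have : (2 : ℂ) ≤ (N : ℂ) := by exact_mod_cast Nat.cast_le.mpr hN
    intro h
    have : (N : ℂ) = 1 := by linear_combination h
    have : (N : ℕ) = 1 := by exact_mod_cast this
    omega
  have hPH : P.conjTranspose = P := by
    ext i j
    simp [hP, Matrix.vecMulVec_apply, mul_comm]
  have hAH : A.conjTranspose = A := by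
    simp [hA, Matrix.conjTranspose_sub, hPH]
  have hAidem : A * A = A := by
    simp only [hA, sub_mul, mul_sub, one_mul, mul_one, aux_idem ψ hψ]
    rw [show P * P = P from aux_idem ψ hψ]
    abel
  have hAps : A.PosSemidef := by
    have := Matrix.posSemidef_conjTranspose_mul_self A
    rwa [hAH, hAidem] at this
  have hTrA : A.trace = (N : ℂ) - 1 := by
    simp [hA, Matrix.trace_sub, show P.trace = 1 from aux_trace ψ hψ]
  have hc : (0 : ℝ) ≤ (((N : ℝ) - 1))⁻¹ := by
    have h1 : (1 : ℝ) ≤ (N : ℝ) := by exact_mod_cast Nat.one_le_cast.mpr (by omega)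
    exact inv_nonneg.mpr (by linarith)
  have hcast : ((N : ℂ) - 1)⁻¹ = (((((N : ℝ) - 1))⁻¹ : ℝ) : ℂ) := by
    push_cast; ring
  refine ⟨?_, ?_, ?_, ?_⟩
  · -- PosSemidef
    have hc' : (0 : ℂ) ≤ ((N : ℂ) - 1)⁻¹ := by
      rw [hcast]
      exact_mod_cast Complex.zero_le_real.mpr hc
    have hstar : star (((N : ℂ) - 1)⁻¹) = ((N : ℂ) - 1)⁻¹ := by
      rw [hcast]; simp [Complex.star_def]
    refine ⟨?_, fun x => ?_⟩
    · show _ = _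
      rw [Matrix.conjTranspose_smul, hAH, hstar]
    · have h2 := mul_nonneg hc' (hAps.2 x)
      simp only [Finsupp.mul_sum] at h2
      convert h2 using 1
      simp only [Matrix.smul_apply, smul_eq_mul]
      exact Finsupp.sum_congr fun i _ => Finsupp.sum_congr fun j _ => by ring
  · rw [Matrix.trace_smul, hTrA, smul_eq_mul, inv_mul_cancel₀ hNne]
  · -- not a unit
    intro h
    have hdet : IsUnit (((N : ℂ) - 1)⁻¹ • A).det := (Matrix.isUnit_iff_isUnit_det _).mp h
    have hψne : ψ ≠ 0 := by
      intro h0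
      rw [h0] at hψ
      simp at hψ
    have hker : (((N : ℂ) - 1)⁻¹ • A).mulVec ψ = 0 := by
      have hPψ : P.mulVec ψ = ψ := by
        ext i
        simp only [Matrix.mulVec, dotProduct, hP, Matrix.vecMulVec_apply, Pi.star_apply]
        calc ∑ k, ψ i * star (ψ k) * ψ k
            = ψ i * ∑ k, star (ψ k) * ψ k := by
              rw [Finset.mul_sum]
              exact Finset.sum_congr rfl fun k _ => by ring
          _ = ψ i := by rw [aux_sum ψ hψ, mul_one]
      have hAψ : A.mulVec ψ = 0 := by
        rw [hA, Matrix.sub_mulVec, Matrix.one_mulVec, hPψ, sub_self]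
      rw [Matrix.smul_mulVec, hAψ, smul_zero]
    have : (((N : ℂ) - 1)⁻¹ • A).det = 0 :=
      (Matrix.exists_mulVec_eq_zero_iff).mp ⟨ψ, hψne, hker⟩
    rw [this] at hdet
    exact hdet.ne_zero rfl
  · rw [Matrix.smul_mul, Matrix.mul_smul, hAidem, Matrix.trace_smul, Matrix.trace_smul, hTrA]
    simp only [smul_eq_mul]
    field_simp
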